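/- Let G be a graph and u,v adjacent vertices with no common neighbor. Then mmfvs(G) ≥ mmfvs(G/uv), where G/uv is the graph obtained by contracting the edge uv. -/

import Mathlib

open SimpleGraph

def IsFVS {V : Type*} (G : SimpleGraph V) (S : Set V) : Prop :=
  (G.induce Sᶜ).IsAcyclic

def IsMinFVS {V : Type*} (G : SimpleGraph V) (S : Set V) : Prop :=
  IsFVS G S ∧ ∀ T : Set V, T ⊂ S → ¬ IsFVS G T

noncomputable def mmfvs {V : Type*} (G : SimpleGraph V) : ℕ :=
  sSup {k | ∃ S : Set V, IsMinFVS G S ∧ S.ncard = k}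

def contract {V : Type*} (G : SimpleGraph V) (u v : V) :
    SimpleGraph {x : V // x ≠ v} where
  Adj a b := a ≠ b ∧ (G.Adj a.1 b.1 ∨ (a.1 = u ∧ G.Adj v b.1) ∨ (b.1 = u ∧ G.Adj a.1 v))
  symm := by
    constructor
    rintro a b ⟨hab, h | ⟨h1, h2⟩ | ⟨h1, h2⟩⟩
    · exact ⟨hab.symm, Or.inl h.symm⟩
    · exact ⟨hab.symm, Or.inr (Or.inr ⟨h1, h2.symm⟩)⟩
    · exact ⟨hab.symm, Or.inr (Or.inl ⟨h1, h2.symm⟩)⟩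
  loopless := by constructor; rintro a ⟨h, -⟩; exact h rfl

set_option linter.unusedSectionVars false

namespace ContractAux

open SimpleGraph.Walk

variable {V : Type*} {W : Type*} {G : SimpleGraph V} {H : SimpleGraph W}

/-- Map a walk along a function that is a "homomorphism on a set". -/
def mapOn (f : V → W) (s : Set V)
    (hf : ∀ a b, a ∈ s → b ∈ s → G.Adj a b → H.Adj (f a) (f b)) :
    ∀ {a b : V} (p : G.Walk a b), (∀ x ∈ p.support, x ∈ s) → H.Walk (f a) (f b)
  | _, _, .nil, _ => .nil
  | _, _, .cons h p, hs =>
      .cons (hf _ _ (hs _ (Walk.start_mem_support _))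
          (hs _ (List.mem_cons_of_mem _ p.start_mem_support)) h)
        (mapOn f s hf p fun x hx => hs x (List.mem_cons_of_mem _ hx))

theorem support_mapOn (f : V → W) (s : Set V) (hf) :
    ∀ {a b : V} (p : G.Walk a b) (hp : ∀ x ∈ p.support, x ∈ s),
      (mapOn (H := H) f s hf p hp).support = p.support.map f
  | _, _, .nil, _ => rfl
  | _, _, .cons h p, hp => by
      simp [mapOn, support_mapOn f s hf p]

theorem edges_mapOn (f : V → W) (s : Set V) (hf) :
    ∀ {a b : V} (p : G.Walk a b) (hp : ∀ x ∈ p.support, x ∈ s),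
      (mapOn (H := H) f s hf p hp).edges = p.edges.map (Sym2.map f)
  | _, _, .nil, _ => rfl
  | _, _, .cons h p, hp => by
      simp [mapOn, edges_mapOn f s hf p]

theorem length_mapOn (f : V → W) (s : Set V) (hf) :
    ∀ {a b : V} (p : G.Walk a b) (hp : ∀ x ∈ p.support, x ∈ s),
      (mapOn (H := H) f s hf p hp).length = p.length
  | _, _, .nil, _ => rfl
  | _, _, .cons h p, hp => by
      simp [mapOn, length_mapOn f s hf p]

theorem isPath_mapOn (f : V → W) (s : Set V) (hf) {a b : V} (p : G.Walk a b)
    (hp : ∀ x ∈ p.support, x ∈ s) (hpp : p.IsPath)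
    (hinj : Set.InjOn f {x | x ∈ p.support}) : (mapOn (H := H) f s hf p hp).IsPath := by
  rw [Walk.isPath_def, support_mapOn]
  exact List.Nodup.map_on (fun x hx y hy hxy => hinj hx hy hxy) hpp.support_nodup

theorem isCycle_mapOn (f : V → W) (s : Set V) (hf) {a : V} (p : G.Walk a a)
    (hp : ∀ x ∈ p.support, x ∈ s) (hpp : p.IsCycle)
    (hinj : Set.InjOn f {x | x ∈ p.support}) : (mapOn (H := H) f s hf p hp).IsCycle := by
  rw [Walk.isCycle_def] at hpp ⊢
  obtain ⟨ht, hne, hnd⟩ := hpp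
  refine ⟨?_, ?_, ?_⟩
  · rw [Walk.isTrail_def, edges_mapOn]
    refine List.Nodup.map_on ?_ ht.edges_nodup
    intro e1 he1 e2 he2 heq
    induction e1 using Sym2.ind with
    | _ x y =>
      induction e2 using Sym2.ind with
      | _ x' y' =>
        rw [Sym2.map_pair_eq, Sym2.map_pair_eq, Sym2.eq_iff] at heq
        have hx := p.fst_mem_support_of_mem_edges he1
        have hy := p.snd_mem_support_of_mem_edges he1
        have hx' := p.fst_mem_support_of_mem_edges he2
        have hy' := p.snd_mem_support_of_mem_edges he2
        rw [Sym2.eq_iff]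
        rcases heq with ⟨h1, h2⟩ | ⟨h1, h2⟩
        · exact Or.inl ⟨hinj hx hx' h1, hinj hy hy' h2⟩
        · exact Or.inr ⟨hinj hx hy' h1, hinj hy hx' h2⟩
  · intro hcon
    have h0 := congrArg Walk.length hcon
    rw [length_mapOn, Walk.length_nil] at h0
    exact hne (Walk.nil_iff_eq_nil.mp (Walk.nil_iff_length_eq.mpr h0))
  · rw [support_mapOn, ← List.map_tail]
    refine List.Nodup.map_on ?_ hnd
    intro x hx y hy hxy
    exact hinj (List.mem_of_mem_tail hx) (List.mem_of_mem_tail hy) hxy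

/-- A graph has a cycle avoiding `S`. -/
def HasCycAvoiding (G : SimpleGraph V) (S : Set V) : Prop :=
  ∃ (a : V) (c : G.Walk a a), c.IsCycle ∧ ∀ x ∈ c.support, x ∉ S

theorem isFVS_iff (G : SimpleGraph V) (S : Set V) :
    IsFVS G S ↔ ¬ HasCycAvoiding G S := by
  constructor
  · rintro hfvs ⟨a, c, hc, hav⟩
    have ha : a ∈ Sᶜ := hav a c.start_mem_support
    classical
    let f : V → ↥(Sᶜ) := fun x => if h : x ∉ S then ⟨x, h⟩ else ⟨a, ha⟩
    have hf : ∀ x y, x ∈ {z | z ∉ S} → y ∈ {z | z ∉ S} → G.Adj x y →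
        (G.induce Sᶜ).Adj (f x) (f y) := by
      intro x y hx hy hadj
      have hx' : x ∉ S := hx
      have hy' : y ∉ S := hy
      simp only [f, dif_pos hx', dif_pos hy']
      exact hadj
    have hcyc := isCycle_mapOn f {z | z ∉ S} hf c hav hc ?_
    · exact hfvs _ hcyc
    · intro x hx y hy hxy
      have hx' : x ∉ S := hav x hx
      have hy' : y ∉ S := hav y hy
      simpa only [f, dif_pos hx', dif_pos hy', Subtype.mk.injEq] using hxy
  · intro hno a c hc
    have hf : ∀ x y : ↥(Sᶜ), x ∈ (Set.univ : Set ↥(Sᶜ)) → y ∈ Set.univ →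
        (G.induce Sᶜ).Adj x y → G.Adj x.val y.val := by
      intro x y _ _ hadj
      rwa [comap_adj] at hadj
    have hcyc := isCycle_mapOn Subtype.val Set.univ hf c (fun x _ => Set.mem_univ x) hc
      (fun x _ y _ h => Subtype.ext h)
    refine hno ⟨_, _, hcyc, ?_⟩
    intro x hx
    rw [support_mapOn, List.mem_map] at hx
    obtain ⟨y, _, rfl⟩ := hx
    exact y.prop

theorem not_isFVS_iff (G : SimpleGraph V) (S : Set V) :
    ¬ IsFVS G S ↔ HasCycAvoiding G S := by
  rw [isFVS_iff, not_not]

theorem mem_support_rotate_iff [DecidableEq V] {a x y : V} (c : G.Walk a a)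
    (h : x ∈ c.support) : y ∈ (c.rotate x h).support ↔ y ∈ c.support := by
  have hs := c.take_spec h
  constructor
  · intro hy
    rw [Walk.rotate, Walk.mem_support_append_iff] at hy
    rcases hy with hy | hy
    · exact c.support_dropUntil_subset h hy
    · exact c.support_takeUntil_subset h hy
  · intro hy
    rw [← hs, Walk.mem_support_append_iff] at hy
    rw [Walk.rotate, Walk.mem_support_append_iff]
    tauto

theorem length_rotate [DecidableEq V] {a x : V} (c : G.Walk a a) (h : x ∈ c.support) :
    (c.rotate x h).length = c.length := by
  have hs := congrArg Walk.length (c.take_spec h)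
  rw [Walk.length_append] at hs
  rw [Walk.rotate, Walk.length_append]
  omega

theorem isPath_concat {a b c : V} {p : G.Walk a b} (hp : p.IsPath) (h : G.Adj b c)
    (hc : c ∉ p.support) : (p.concat h).IsPath := by
  rw [← Walk.isPath_reverse_iff, Walk.reverse_concat, Walk.cons_isPath_iff]
  refine ⟨hp.reverse, ?_⟩
  rwa [Walk.support_reverse, List.mem_reverse]


section Contract

variable {V : Type*} [DecidableEq V] {G : SimpleGraph V} {u v : V}

/-- The collapsed vertex. -/
def wv (huv : G.Adj u v) : {x : V // x ≠ v} := ⟨u, huv.ne⟩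

/-- The projection map. -/
def f1 (huv : G.Adj u v) : V → {x : V // x ≠ v} :=
  fun x => if h : x = v then ⟨u, huv.ne⟩ else ⟨x, h⟩

variable (huv : G.Adj u v)

lemma f1_apply_ne {x : V} (hx : x ≠ v) : f1 huv x = ⟨x, hx⟩ := dif_neg hx

lemma f1_apply_v : f1 huv v = wv huv := dif_pos rfl

lemma f1_eq_w_iff {x : V} : f1 huv x = wv huv ↔ x = u ∨ x = v := by
  unfold f1 wv
  by_cases h : x = v
  · simp [h]
  · simp [h, Subtype.ext_iff]

lemma f1_val_mem {x : V} : (f1 huv x).val = x ∨ (f1 huv x).val = u := by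
  by_cases h : x = v
  · rw [h, f1_apply_v]; exact Or.inr rfl
  · rw [f1_apply_ne huv h]; exact Or.inl rfl

lemma adj_f1_of_ne_v {a b : V} (ha : a ≠ v) (hb : b ≠ v) (h : G.Adj a b) :
    (contract G u v).Adj (f1 huv a) (f1 huv b) := by
  rw [f1_apply_ne huv ha, f1_apply_ne huv hb]
  exact ⟨fun hh => h.ne (congrArg Subtype.val hh), Or.inl h⟩

lemma adj_f1_of_ne_u {a b : V} (ha : a ≠ u) (hb : b ≠ u) (h : G.Adj a b) :
    (contract G u v).Adj (f1 huv a) (f1 huv b) := by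
  by_cases hav : a = v
  · subst hav
    rw [f1_apply_v, f1_apply_ne huv h.ne']
    exact ⟨fun hh => hb (congrArg Subtype.val hh).symm, Or.inr (Or.inl ⟨rfl, h⟩)⟩
  · by_cases hbv : b = v
    · subst hbv
      rw [f1_apply_v, f1_apply_ne huv h.ne]
      exact ⟨fun hh => ha (congrArg Subtype.val hh), Or.inr (Or.inr ⟨rfl, h⟩)⟩
    · exact adj_f1_of_ne_v huv hav hbv h

lemma adj_w_f1_left_u {x : V} (hxu : x ≠ u) (hxv : x ≠ v) (h : G.Adj u x) :
    (contract G u v).Adj (wv huv) (f1 huv x) := by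
  rw [f1_apply_ne huv hxv]
  exact ⟨fun hh => hxu (congrArg Subtype.val hh).symm, Or.inl h⟩

lemma adj_w_f1_left_v {x : V} (hxu : x ≠ u) (hxv : x ≠ v) (h : G.Adj v x) :
    (contract G u v).Adj (wv huv) (f1 huv x) := by
  rw [f1_apply_ne huv hxv]
  exact ⟨fun hh => hxu (congrArg Subtype.val hh).symm, Or.inr (Or.inl ⟨rfl, h⟩)⟩

lemma adj_f1_w_right_u {x : V} (hxu : x ≠ u) (hxv : x ≠ v) (h : G.Adj x u) :
    (contract G u v).Adj (f1 huv x) (wv huv) := by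
  rw [f1_apply_ne huv hxv]
  exact ⟨fun hh => hxu (congrArg Subtype.val hh), Or.inl h⟩

lemma adj_f1_w_right_v {x : V} (hxu : x ≠ u) (hxv : x ≠ v) (h : G.Adj x v) :
    (contract G u v).Adj (f1 huv x) (wv huv) := by
  rw [f1_apply_ne huv hxv]
  exact ⟨fun hh => hxu (congrArg Subtype.val hh), Or.inr (Or.inr ⟨rfl, h⟩)⟩

lemma adj_val {a b : {x : V // x ≠ v}} (h : (contract G u v).Adj a b)
    (ha : a.val ≠ u) (hb : b.val ≠ u) : G.Adj a.val b.val := by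
  rcases h.2 with h' | ⟨h1, _⟩ | ⟨h1, _⟩
  · exact h'
  · exact absurd h1 ha
  · exact absurd h1 hb

include huv in
lemma gcore {T : Set V} (huT : u ∉ T) (hvT : v ∉ T)
    {y z x1 xk : V} (hy : y = u ∨ y = v) (hz : z = u ∨ z = v)
    {q : G.Walk x1 xk} (hq : q.IsPath) (hne : x1 ≠ xk)
    (hqu : u ∉ q.support) (hqv : v ∉ q.support)
    (hA : G.Adj y x1) (hB : G.Adj xk z)
    (hav : ∀ x ∈ q.support, x ∉ T) : HasCycAvoiding G T := by
  have hyq : y ∉ q.support := by rcases hy with rfl | rfl <;> assumption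
  have hzq : z ∉ q.support := by rcases hz with rfl | rfl <;> assumption
  have hyT : y ∉ T := by rcases hy with rfl | rfl <;> assumption
  have hzT : z ∉ T := by rcases hz with rfl | rfl <;> assumption
  by_cases hyz : y = z
  · subst hyz
    refine ⟨y, Walk.cons hA (q.concat hB), ?_, ?_⟩
    · rw [Walk.cons_isCycle_iff]
      refine ⟨isPath_concat hq hB hyq, ?_⟩
      intro hmem
      rw [Walk.edges_concat, List.concat_eq_append, List.mem_append] at hmem
      rcases hmem with hmem | hmem
      · exact hyq (q.fst_mem_support_of_mem_edges hmem)
      · rw [List.mem_singleton, Sym2.eq_iff] at hmem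
        rcases hmem with ⟨h1, _⟩ | ⟨_, h2⟩
        · exact hyq (h1 ▸ q.end_mem_support)
        · exact hne h2
    · intro x hx
      rw [Walk.support_cons, List.mem_cons, Walk.support_concat,
        List.mem_append, List.mem_singleton] at hx
      rcases hx with rfl | hx | rfl
      · exact hyT
      · exact hav x hx
      · exact hyT
  · have hzy : G.Adj z y := by
      rcases hy with rfl | rfl <;> rcases hz with rfl | rfl
      · exact absurd rfl hyz
      · exact huv.symm
      · exact huv
      · exact absurd rfl hyz
    refine ⟨y, Walk.cons hA ((q.concat hB).concat hzy), ?_, ?_⟩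
    · rw [Walk.cons_isCycle_iff]
      constructor
      · refine isPath_concat (isPath_concat hq hB hzq) hzy ?_
        rw [Walk.support_concat, List.mem_append, List.mem_singleton]
        rintro (hy' | rfl)
        · exact hyq hy'
        · exact hyz rfl
      · intro hmem
        rw [Walk.edges_concat, Walk.edges_concat, List.concat_eq_append, List.concat_eq_append,
          List.mem_append, List.mem_append, List.mem_singleton, List.mem_singleton] at hmem
        rcases hmem with (hmem | hmem) | hmem
        · exact hyq (q.fst_mem_support_of_mem_edges hmem)
        · rw [Sym2.eq_iff] at hmem
          rcases hmem with ⟨h1, _⟩ | ⟨h1, _⟩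
          · exact hyq (h1 ▸ q.end_mem_support)
          · exact hyz h1
        · rw [Sym2.eq_iff] at hmem
          rcases hmem with ⟨h1, _⟩ | ⟨_, h2⟩
          · exact hyz h1
          · exact hzq (h2 ▸ q.start_mem_support)
    · intro x hx
      rw [Walk.support_cons, List.mem_cons, Walk.support_concat, Walk.support_concat,
        List.append_assoc, List.mem_append,
        List.mem_append, List.mem_singleton, List.mem_singleton] at hx
      rcases hx with rfl | hx | (rfl | rfl)
      · exact hyT
      · exact hav x hx
      · exact hzT
      · exact hyT

/-- Close up a lifted path into a cycle through the contracted vertex. -/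
lemma fecore {S : Set V} (huS : u ∉ S)
    {x1 xk : V} {q : G.Walk x1 xk} (hq : q.IsPath) (hne : x1 ≠ xk)
    (hqu : u ∉ q.support) (hqv : v ∉ q.support)
    (hA : (contract G u v).Adj (wv huv) (f1 huv x1))
    (hB : (contract G u v).Adj (f1 huv xk) (wv huv))
    (hav : ∀ x ∈ q.support, x ∉ S) :
    HasCycAvoiding (contract G u v) (Subtype.val ⁻¹' S) := by
  have hf : ∀ a b, a ∈ {x | x ∈ q.support} → b ∈ {x | x ∈ q.support} → G.Adj a b →
      (contract G u v).Adj (f1 huv a) (f1 huv b) := by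
    intro a b ha hb h
    exact adj_f1_of_ne_v huv (fun hh => hqv (hh ▸ ha)) (fun hh => hqv (hh ▸ hb)) h
  have hinj : Set.InjOn (f1 huv) {x | x ∈ q.support} := by
    intro x hx y hy hxy
    rw [f1_apply_ne huv (fun hh => hqv (hh ▸ hx)), f1_apply_ne huv (fun hh => hqv (hh ▸ hy))] at hxy
    exact congrArg Subtype.val hxy
  set q' := mapOn (f1 huv) {x | x ∈ q.support} hf q (fun x hx => hx) with hq'def
  have hq'sup : q'.support = q.support.map (f1 huv) := support_mapOn _ _ _ _ _
  have hwq' : wv huv ∉ q'.support := by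
    rw [hq'sup, List.mem_map]
    rintro ⟨x, hx, hxw⟩
    rcases (f1_eq_w_iff huv).mp hxw with rfl | rfl
    · exact hqu hx
    · exact hqv hx
  refine ⟨wv huv, Walk.cons hA (q'.concat hB), ?_, ?_⟩
  · rw [Walk.cons_isCycle_iff]
    refine ⟨isPath_concat (isPath_mapOn _ _ _ _ _ hq hinj) hB hwq', ?_⟩
    intro hmem
    rw [Walk.edges_concat, List.concat_eq_append, List.mem_append] at hmem
    rcases hmem with hmem | hmem
    · exact hwq' (q'.fst_mem_support_of_mem_edges hmem)
    · rw [List.mem_singleton, Sym2.eq_iff] at hmem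
      rcases hmem with ⟨h1, _⟩ | ⟨_, h2⟩
      · exact hwq' (by rw [h1]; exact q'.end_mem_support)
      · exact hne (hinj q.start_mem_support q.end_mem_support h2)
  · intro x hx
    rw [Walk.support_cons, List.mem_cons, Walk.support_concat,
      List.mem_append, List.mem_singleton] at hx
    rcases hx with rfl | hx | rfl
    · exact huS
    · rw [hq'sup, List.mem_map] at hx
      obtain ⟨y, hy, rfl⟩ := hx
      have : (f1 huv y).val = y := by
        rw [f1_apply_ne huv (fun hh => hqv (hh ▸ hy))]
      rw [Set.mem_preimage, this]
      exact hav y hy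
    · exact huS

include huv in
lemma fe2 (hcommon : G.neighborSet u ∩ G.neighborSet v = ∅) {S : Set V} (huS : u ∉ S)
    {y z : V} (hyz : (y = u ∧ z = v) ∨ (y = v ∧ z = u))
    {p : G.Walk y z} (hp : p.IsPath) (hlen : 2 ≤ p.length)
    (hav : ∀ x ∈ p.support, x ∉ S) :
    HasCycAvoiding (contract G u v) (Subtype.val ⁻¹' S) := by
  have hne_yz : y ≠ z := by
    rcases hyz with ⟨rfl, rfl⟩ | ⟨rfl, rfl⟩
    · exact huv.ne
    · exact huv.ne'
  obtain ⟨x1, h1, p2, rfl⟩ := Walk.not_nil_iff.mp (Walk.not_nil_of_ne (p := p) hne_yz)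
  have hp2len : 1 ≤ p2.length := by
    rw [Walk.length_cons] at hlen; omega
  have hp2nn : ¬ p2.reverse.Nil := by
    rw [Walk.not_nil_iff_lt_length, Walk.length_reverse]; omega
  obtain ⟨xk, hk', r, hrev⟩ := Walk.not_nil_iff.mp hp2nn
  have hp2eq : p2 = r.reverse.concat hk'.symm := by
    rw [← Walk.reverse_reverse p2, hrev, Walk.reverse_cons]
    exact (Walk.concat_eq_append _ _).symm
  set q : G.Walk x1 xk := r.reverse with hqdef
  have hk : G.Adj xk z := hk'.symm
  -- path facts
  rw [Walk.cons_isPath_iff] at hp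
  obtain ⟨hp2, hyp2⟩ := hp
  rw [hp2eq] at hp2 hyp2
  have hqpath : q.IsPath := by
    have := hp2
    rw [Walk.concat_eq_append] at this
    exact this.of_append_left
  have hzq : z ∉ q.support := by
    have hnd := hp2.support_nodup
    rw [Walk.support_concat, List.nodup_append'] at hnd
    intro hz'
    exact hnd.2.2 hz' (List.mem_singleton_self z)
  have hyq : y ∉ q.support := by
    intro hy'
    apply hyp2
    rw [Walk.support_concat, List.mem_append]
    exact Or.inl hy'
  have huq : u ∉ q.support := by
    rcases hyz with ⟨rfl, _⟩ | ⟨_, rfl⟩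
    · exact hyq
    · exact hzq
  have hvq : v ∉ q.support := by
    rcases hyz with ⟨_, rfl⟩ | ⟨rfl, _⟩
    · exact hzq
    · exact hyq
  by_cases hne : x1 = xk
  · -- triangle, contradiction with no common neighbor
    exfalso
    subst hne
    have hqnil : q = Walk.nil := (Walk.isPath_iff_eq_nil (p := q)).mp hqpath
    have hx1u : G.Adj u x1 ∧ G.Adj v x1 := by
      rcases hyz with ⟨rfl, rfl⟩ | ⟨rfl, rfl⟩
      · exact ⟨h1, hk.symm⟩
      · exact ⟨hk.symm, h1⟩
    have : x1 ∈ G.neighborSet u ∩ G.neighborSet v := ⟨hx1u.1, hx1u.2⟩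
    rw [hcommon] at this
    exact this
  · -- build the contract cycle
    have hx1u : x1 ≠ u := fun hh => huq (hh ▸ q.start_mem_support)
    have hx1v : x1 ≠ v := fun hh => hvq (hh ▸ q.start_mem_support)
    have hxku : xk ≠ u := fun hh => huq (hh ▸ q.end_mem_support)
    have hxkv : xk ≠ v := fun hh => hvq (hh ▸ q.end_mem_support)
    have hA : (contract G u v).Adj (wv huv) (f1 huv x1) := by
      rcases hyz with ⟨rfl, _⟩ | ⟨rfl, _⟩
      · exact adj_w_f1_left_u huv hx1u hx1v h1
      · exact adj_w_f1_left_v huv hx1u hx1v h1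
    have hB : (contract G u v).Adj (f1 huv xk) (wv huv) := by
      rcases hyz with ⟨_, rfl⟩ | ⟨_, rfl⟩
      · exact adj_f1_w_right_v huv hxku hxkv hk
      · exact adj_f1_w_right_u huv hxku hxkv hk
    refine fecore huv huS hqpath hne huq hvq hA hB ?_
    intro x hx
    apply hav
    rw [Walk.support_cons, List.mem_cons]
    right
    rw [hp2eq, Walk.support_concat, List.mem_append]
    exact Or.inl hx

include huv in
lemma proj (hcommon : G.neighborSet u ∩ G.neighborSet v = ∅) {S : Set V}
    (huS : u ∉ S) (hvS : v ∉ S) (h : HasCycAvoiding G S) :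
    HasCycAvoiding (contract G u v) (Subtype.val ⁻¹' S) := by
  obtain ⟨a0, c0, hc0, hav0⟩ := h
  suffices H : ∀ n : ℕ, ∀ {a : V} (c : G.Walk a a), c.length ≤ n → c.IsCycle →
      (∀ x ∈ c.support, x ∉ S) → HasCycAvoiding (contract G u v) (Subtype.val ⁻¹' S) from
    H c0.length c0 le_rfl hc0 hav0
  intro n
  induction n with
  | zero =>
    intro a c hlen hc _
    have := hc.three_le_length
    omega
  | succ n ih =>
    intro a c hlen hc hav
    by_cases hvs : v ∈ c.support
    · by_cases hus : u ∈ c.support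
      · -- cycle through both u and v
        have hc1 : (c.rotate u hus).IsCycle := hc.rotate hus
        have hlen1 : (c.rotate u hus).length = c.length := length_rotate c hus
        have hsup1 : ∀ x, x ∈ (c.rotate u hus).support ↔ x ∈ c.support :=
          fun x => mem_support_rotate_iff c hus
        obtain ⟨b, hb, p, hcons⟩ := Walk.not_nil_iff.mp hc1.not_nil
        have hpc : (Walk.cons hb p).IsCycle := hcons ▸ hc1
        have hplen : (Walk.cons hb p).length = c.length := by rw [← hcons]; exact hlen1
        rw [Walk.cons_isCycle_iff] at hpc
        obtain ⟨hp, hedg⟩ := hpc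
        have hvp : v ∈ p.support := by
          have hv1 : v ∈ (c.rotate u hus).support := (hsup1 v).mpr hvs
          rw [hcons, Walk.support_cons, List.mem_cons] at hv1
          rcases hv1 with h' | h'
          · exact absurd h'.symm huv.ne
          · exact h'
        have havp : ∀ x ∈ p.support, x ∉ S := by
          intro x hx
          apply hav
          rw [← hsup1 x, hcons, Walk.support_cons]
          exact List.mem_cons_of_mem _ hx
        have hlenc : 3 ≤ c.length := hc.three_le_length
        by_cases hbv : b = v
        · subst hbv
          refine fe2 huv hcommon huS (Or.inr ⟨rfl, rfl⟩) hp ?_ havp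
          rw [Walk.length_cons] at hplen
          omega
        · set q2 := p.dropUntil v hvp with hq2def
          have hq2p : q2.IsPath := hp.dropUntil hvp
          have htkspec := p.take_spec hvp
          have hlensplit : (p.takeUntil v hvp).length + q2.length = p.length := by
            have := congrArg Walk.length htkspec
            rwa [Walk.length_append] at this
          have htklen : 1 ≤ (p.takeUntil v hvp).length := by
            by_contra h'
            push_neg at h'
            have : (p.takeUntil v hvp).length = 0 := by omega
            exact hbv (Walk.nil_iff_length_eq.mpr this).eq
          by_cases hq2e : s(u, v) ∈ q2.edges
          · -- v is the penultimate vertex of the rotated cycle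
            obtain ⟨y, hy, r, hrevq⟩ :=
              Walk.not_nil_iff.mp (Walk.not_nil_of_ne (p := q2.reverse) huv.ne)
            have hq2eq : q2 = r.reverse.concat hy.symm := by
              rw [← Walk.reverse_reverse q2, hrevq, Walk.reverse_cons]
              exact (Walk.concat_eq_append _ _).symm
            have hrpath : r.reverse.IsPath := by
              have h' := hq2p
              rw [hq2eq, Walk.concat_eq_append] at h'
              exact h'.of_append_left
            have hur : u ∉ r.reverse.support := by
              have hnd := hq2p.support_nodup
              rw [hq2eq, Walk.support_concat, List.nodup_append'] at hnd
              intro h'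
              exact hnd.2.2 h' (List.mem_singleton_self _)
            have hyv : y = v := by
              rw [hq2eq, Walk.edges_concat, List.concat_eq_append, List.mem_append,
                List.mem_singleton] at hq2e
              rcases hq2e with h' | h'
              · exact absurd (r.reverse.fst_mem_support_of_mem_edges h') hur
              · rw [Sym2.eq_iff] at h'
                rcases h' with ⟨_, h2⟩ | ⟨_, h2⟩
                · exact absurd h2 huv.ne'
                · exact h2.symm
            have hyv' : v = y := hyv.symm
            subst hyv'
            have hrnil : r.reverse = Walk.nil := Walk.isPath_iff_eq_nil.mp hrpath
            have hq2single : q2 = Walk.cons hy.symm Walk.nil := by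
              rw [hq2eq, hrnil, Walk.concat_nil]
            have htkp : (p.takeUntil v hvp).IsPath := hp.takeUntil hvp
            have hutk : u ∉ (p.takeUntil v hvp).support := by
              have hnd := hp.support_nodup
              rw [← htkspec, Walk.support_append, List.nodup_append'] at hnd
              intro h'
              exact hnd.2.2 h' (by rw [← hq2def, hq2single]; simp)
            refine fe2 huv hcommon huS (Or.inl ⟨rfl, rfl⟩)
              (p := Walk.cons hb (p.takeUntil v hvp))
              ((Walk.cons_isPath_iff _ _).mpr ⟨htkp, hutk⟩) ?_ ?_
            · rw [Walk.length_cons]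
              omega
            · intro x hx
              rw [Walk.support_cons, List.mem_cons] at hx
              rcases hx with rfl | hx
              · exact hav x hus
              · exact havp x (p.support_takeUntil_subset hvp hx)
          · -- strictly shorter cycle: recurse
            have hcyc2 : (Walk.cons huv q2).IsCycle := (Walk.cons_isCycle_iff _ _).mpr ⟨hq2p, hq2e⟩
            refine ih (Walk.cons huv q2) ?_ hcyc2 ?_
            · rw [Walk.length_cons]
              rw [Walk.length_cons] at hplen
              omega
            · intro x hx
              rw [Walk.support_cons, List.mem_cons] at hx
              rcases hx with rfl | hx
              · exact huS
              · exact havp x (p.support_dropUntil_subset hvp hx)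
      · -- u not on the cycle: map by f1 (which sends v to u)
        have hf : ∀ a' b', a' ∈ {x | x ∈ c.support} → b' ∈ {x | x ∈ c.support} → G.Adj a' b' →
            (contract G u v).Adj (f1 huv a') (f1 huv b') := by
          intro a' b' ha' hb' h'
          exact adj_f1_of_ne_u huv (fun hh => hus (hh ▸ ha')) (fun hh => hus (hh ▸ hb')) h'
        have hinj : Set.InjOn (f1 huv) {x | x ∈ c.support} := by
          intro x hx y hy hxy
          by_cases hxv : x = v <;> by_cases hyv : y = v
          · rw [hxv, hyv]
          · rw [hxv, f1_apply_v, f1_apply_ne huv hyv] at hxy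
            have h' : u = y := congrArg Subtype.val hxy
            exact absurd (show u ∈ c.support by rw [h']; exact hy) hus
          · rw [hyv, f1_apply_v, f1_apply_ne huv hxv] at hxy
            have h' : x = u := congrArg Subtype.val hxy
            exact absurd (show u ∈ c.support by rw [← h']; exact hx) hus
          · rw [f1_apply_ne huv hxv, f1_apply_ne huv hyv] at hxy
            exact congrArg Subtype.val hxy
        refine ⟨_, mapOn (f1 huv) _ hf c (fun x hx => hx),
          isCycle_mapOn _ _ _ _ _ hc hinj, ?_⟩
        intro x hx
        rw [support_mapOn, List.mem_map] at hx
        obtain ⟨y, hy, rfl⟩ := hx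
        rw [Set.mem_preimage]
        rcases f1_val_mem huv (x := y) with h' | h'
        · rw [h']; exact hav y hy
        · rw [h']; exact huS
    · -- v not on the cycle: f1 is just the inclusion
      have hf : ∀ a' b', a' ∈ {x | x ∈ c.support} → b' ∈ {x | x ∈ c.support} → G.Adj a' b' →
          (contract G u v).Adj (f1 huv a') (f1 huv b') := by
        intro a' b' ha' hb' h'
        exact adj_f1_of_ne_v huv (fun hh => hvs (hh ▸ ha')) (fun hh => hvs (hh ▸ hb')) h'
      have hinj : Set.InjOn (f1 huv) {x | x ∈ c.support} := by
        intro x hx y hy hxy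
        rw [f1_apply_ne huv (fun hh => hvs (hh ▸ hx)),
          f1_apply_ne huv (fun hh => hvs (hh ▸ hy))] at hxy
        exact congrArg Subtype.val hxy
      refine ⟨_, mapOn (f1 huv) _ hf c (fun x hx => hx),
        isCycle_mapOn _ _ _ _ _ hc hinj, ?_⟩
      intro x hx
      rw [support_mapOn, List.mem_map] at hx
      obtain ⟨y, hy, rfl⟩ := hx
      rw [Set.mem_preimage, f1_apply_ne huv (fun hh => hvs (hh ▸ hy))]
      exact hav y hy

include huv in
lemma lift {T : Set V} (huT : u ∉ T) (hvT : v ∉ T)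
    (h : HasCycAvoiding (contract G u v) (Subtype.val ⁻¹' T)) : HasCycAvoiding G T := by
  obtain ⟨a, c, hc, hav⟩ := h
  by_cases hws : wv huv ∈ c.support
  · -- cycle through the contracted vertex
    have hc1 : (c.rotate (wv huv) hws).IsCycle := hc.rotate hws
    have hsup1 : ∀ x, x ∈ (c.rotate (wv huv) hws).support ↔ x ∈ c.support :=
      fun x => mem_support_rotate_iff c hws
    obtain ⟨b, hA', p', hcons⟩ := Walk.not_nil_iff.mp hc1.not_nil
    have hpc : (Walk.cons hA' p').IsCycle := hcons ▸ hc1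
    rw [Walk.cons_isCycle_iff] at hpc
    obtain ⟨hp', hedg⟩ := hpc
    have hbw : b ≠ wv huv := fun hh => (contract G u v).loopless.irrefl _ (hh ▸ hA')
    have hpnn : ¬ p'.reverse.Nil := by
      rw [Walk.not_nil_iff_lt_length, Walk.length_reverse]
      by_contra h'
      push_neg at h'
      have h0 : p'.length = 0 := by omega
      exact hbw (Walk.nil_iff_length_eq.mpr h0).eq
    obtain ⟨xk, hk', r, hrev⟩ := Walk.not_nil_iff.mp hpnn
    have hpeq : p' = r.reverse.concat hk'.symm := by
      rw [← Walk.reverse_reverse p', hrev, Walk.reverse_cons]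
      exact (Walk.concat_eq_append _ _).symm
    set q := r.reverse with hqdef
    have hB' : (contract G u v).Adj xk (wv huv) := hk'.symm
    rw [hpeq] at hp' hedg
    have hqpath : q.IsPath := by
      have := hp'
      rw [Walk.concat_eq_append] at this
      exact this.of_append_left
    have hwq : wv huv ∉ q.support := by
      have hnd := hp'.support_nodup
      rw [Walk.support_concat, List.nodup_append'] at hnd
      intro hw'
      exact hnd.2.2 hw' (List.mem_singleton_self _)
    have hbxk : b ≠ xk := by
      intro hh
      apply hedg
      rw [Walk.edges_concat, List.concat_eq_append, List.mem_append, List.mem_singleton]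
      right
      rw [Sym2.eq_swap, hh]
    -- lift q to G
    have hvalu : ∀ x ∈ q.support, x.val ≠ u := by
      intro x hx hh
      exact hwq (by rwa [show x = wv huv from Subtype.ext hh] at hx)
    have hf : ∀ a' b', a' ∈ {x | x ∈ q.support} → b' ∈ {x | x ∈ q.support} →
        (contract G u v).Adj a' b' → G.Adj a'.val b'.val := by
      intro a' b' ha' hb' h'
      exact adj_val h' (hvalu _ ha') (hvalu _ hb')
    set qG := mapOn Subtype.val _ hf q (fun x hx => hx) with hqGdef
    have hqGpath : qG.IsPath := isPath_mapOn _ _ _ _ _ hqpath (fun x _ y _ hxy => Subtype.ext hxy)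
    have hqGsup : qG.support = q.support.map Subtype.val := support_mapOn _ _ _ _ _
    have hqGu : u ∉ qG.support := by
      rw [hqGsup, List.mem_map]
      rintro ⟨x, hx, hxu⟩
      exact hvalu x hx hxu
    have hqGv : v ∉ qG.support := by
      rw [hqGsup, List.mem_map]
      rintro ⟨x, hx, hxv⟩
      exact x.prop hxv
    -- extract the closing adjacencies
    obtain ⟨y, hy, hyb⟩ : ∃ y, (y = u ∨ y = v) ∧ G.Adj y b.val := by
      rcases hA'.2 with h' | ⟨_, h'⟩ | ⟨h', _⟩
      · exact ⟨u, Or.inl rfl, h'⟩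
      · exact ⟨v, Or.inr rfl, h'⟩
      · exact absurd (Subtype.ext h') (fun hh => hbw hh)
    obtain ⟨z, hz, hkz⟩ : ∃ z, (z = u ∨ z = v) ∧ G.Adj xk.val z := by
      rcases hB'.2 with h' | ⟨h', _⟩ | ⟨_, h'⟩
      · exact ⟨u, Or.inl rfl, h'⟩
      · exact absurd h' (hvalu xk q.end_mem_support)
      · exact ⟨v, Or.inr rfl, h'⟩
    refine gcore huv huT hvT hy hz hqGpath (fun hh => hbxk (Subtype.ext hh)) hqGu hqGv hyb hkz ?_
    intro x hx
    rw [hqGsup, List.mem_map] at hx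
    obtain ⟨x', hx', rfl⟩ := hx
    have : x' ∈ c.support := by
      rw [← hsup1 x', hcons, Walk.support_cons]
      refine List.mem_cons_of_mem _ ?_
      rw [hpeq, Walk.support_concat, List.mem_append]
      exact Or.inl hx'
    exact hav x' this
  · -- the contracted vertex is not on the cycle
    have hvalu : ∀ x ∈ c.support, x.val ≠ u := by
      intro x hx hh
      exact hws (by rwa [show x = wv huv from Subtype.ext hh] at hx)
    have hf : ∀ a' b', a' ∈ {x | x ∈ c.support} → b' ∈ {x | x ∈ c.support} →
        (contract G u v).Adj a' b' → G.Adj a'.val b'.val := by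
      intro a' b' ha' hb' h'
      exact adj_val h' (hvalu _ ha') (hvalu _ hb')
    refine ⟨_, mapOn Subtype.val _ hf c (fun x hx => hx),
      isCycle_mapOn _ _ _ _ _ hc (fun x _ y _ hxy => Subtype.ext hxy), ?_⟩
    intro x hx
    rw [support_mapOn, List.mem_map] at hx
    obtain ⟨y, hy, rfl⟩ := hx
    exact hav y hy

lemma hasCyc_mono {A B : Set V} (h : A ⊆ B) (hB : HasCycAvoiding G B) : HasCycAvoiding G A := by
  obtain ⟨a, c, hc, hav⟩ := hB
  exact ⟨a, c, hc, fun x hx hxA => hav x hx (h hxA)⟩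

include huv in
lemma lift_mem {T : Set V} (huT : u ∈ T)
    (h : HasCycAvoiding (contract G u v) (Subtype.val ⁻¹' T)) : HasCycAvoiding G T := by
  obtain ⟨a, c, hc, hav⟩ := h
  have hvalu : ∀ x ∈ c.support, x.val ≠ u := by
    intro x hx hh
    exact hav x hx (by rw [Set.mem_preimage, hh]; exact huT)
  have hf : ∀ a' b', a' ∈ {x | x ∈ c.support} → b' ∈ {x | x ∈ c.support} →
      (contract G u v).Adj a' b' → G.Adj a'.val b'.val := by
    intro a' b' ha' hb' h'
    exact adj_val h' (hvalu _ ha') (hvalu _ hb')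
  refine ⟨_, mapOn Subtype.val _ hf c (fun x hx => hx),
    isCycle_mapOn _ _ _ _ _ hc (fun x _ y _ hxy => Subtype.ext hxy), ?_⟩
  intro x hx
  rw [support_mapOn, List.mem_map] at hx
  obtain ⟨y, hy, rfl⟩ := hx
  exact hav y hy

include huv in
lemma proj_mem {S : Set V} (hvS : v ∈ S) (h : HasCycAvoiding G S) :
    HasCycAvoiding (contract G u v) (Subtype.val ⁻¹' S) := by
  obtain ⟨a, c, hc, hav⟩ := h
  have hvs : v ∉ c.support := fun hx => hav v hx hvS
  have hf : ∀ a' b', a' ∈ {x | x ∈ c.support} → b' ∈ {x | x ∈ c.support} → G.Adj a' b' →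
      (contract G u v).Adj (f1 huv a') (f1 huv b') := by
    intro a' b' ha' hb' h'
    exact adj_f1_of_ne_v huv (fun hh => hvs (hh ▸ ha')) (fun hh => hvs (hh ▸ hb')) h'
  have hinj : Set.InjOn (f1 huv) {x | x ∈ c.support} := by
    intro x hx y hy hxy
    rw [f1_apply_ne huv (fun hh => hvs (hh ▸ hx)),
      f1_apply_ne huv (fun hh => hvs (hh ▸ hy))] at hxy
    exact congrArg Subtype.val hxy
  refine ⟨_, mapOn (f1 huv) _ hf c (fun x hx => hx),
    isCycle_mapOn _ _ _ _ _ hc hinj, ?_⟩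
  intro x hx
  rw [support_mapOn, List.mem_map] at hx
  obtain ⟨y, hy, rfl⟩ := hx
  rw [Set.mem_preimage, f1_apply_ne huv (fun hh => hvs (hh ▸ hy))]
  exact hav y hy

include huv in
lemma key [Fintype V] (hcommon : G.neighborSet u ∩ G.neighborSet v = ∅)
    {S' : Set {x : V // x ≠ v}} (hS' : IsMinFVS (contract G u v) S') :
    ∃ S : Set V, IsMinFVS G S ∧ S'.ncard ≤ S.ncard := by
  obtain ⟨hfvs', hmin'⟩ := hS'
  set SG : Set V := Subtype.val '' S' with hSGdef
  have hvSG : v ∉ SG := by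
    rintro ⟨y, -, hy⟩
    exact y.prop hy
  have hpre : Subtype.val ⁻¹' SG = S' := Set.preimage_image_eq _ Subtype.val_injective
  have hcard : S'.ncard = SG.ncard := (Set.ncard_image_of_injective _ Subtype.val_injective).symm
  by_cases huSG : u ∈ SG
  · -- Case B : u corresponds to the contracted vertex in S'
    have hwS' : wv huv ∈ S' := by
      obtain ⟨y, hy, hyv⟩ := huSG
      rwa [show y = wv huv from Subtype.ext hyv] at hy
    set T0 : Set V := SG \ {u} with hT0def
    have hvT0 : v ∉ T0 := fun h => hvSG h.1
    have huT0 : u ∉ T0 := fun h => h.2 rfl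
    have hpreT0 : Subtype.val ⁻¹' T0 = S' \ {wv huv} := by
      rw [hT0def, Set.preimage_diff, hpre]
      congr 1
      ext x
      simp only [Set.mem_preimage, Set.mem_singleton_iff]
      exact ⟨fun h => Subtype.ext h, fun h => congrArg Subtype.val h⟩
    have hSGT0 : T0 ∪ {u} = SG := Set.diff_union_of_subset (Set.singleton_subset_iff.mpr huSG)
    have hcardT0 : T0.ncard + 1 = SG.ncard :=
      Set.ncard_diff_singleton_add_one huSG (Set.toFinite _)
    -- the cycle certifying that T0 alone is not an fvs of G
    have cyc_w : HasCycAvoiding G T0 := by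
      have h1 : S' \ {wv huv} ⊂ S' := Set.sdiff_singleton_ssubset.mpr hwS'
      have h2 := (not_isFVS_iff _ _).mp (hmin' _ h1)
      rw [← hpreT0] at h2
      exact lift huv huT0 hvT0 h2
    -- the cycles certifying each s ∈ T0 is needed even when u and v are both removed
    have cyc_s : ∀ s ∈ T0, HasCycAvoiding G ((T0 \ {s}) ∪ {u, v}) := by
      intro s hs
      have hsv : s ≠ v := fun h => hvSG (h ▸ hs.1)
      have hsu : s ≠ u := hs.2
      have hsS' : (⟨s, hsv⟩ : {x : V // x ≠ v}) ∈ S' := by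
        obtain ⟨y, hy, hyv⟩ := hs.1
        rwa [show y = ⟨s, hsv⟩ from Subtype.ext hyv] at hy
      have h1 : S' \ {⟨s, hsv⟩} ⊂ S' := Set.sdiff_singleton_ssubset.mpr hsS'
      have h2 := (not_isFVS_iff _ _).mp (hmin' _ h1)
      refine lift_mem huv (Or.inr (Or.inl rfl)) (hasCyc_mono ?_ h2)
      -- val ⁻¹' ((T0 \ {s}) ∪ {u, v}) ⊆ S' \ {⟨s, hsv⟩}
      intro x hx
      rw [Set.mem_preimage] at hx
      rcases hx with hx | hx
      · have hxS' : x ∈ S' \ {wv huv} := by rw [← hpreT0]; exact hx.1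
        refine ⟨hxS'.1, ?_⟩
        intro hh
        have hxe : x = ⟨s, hsv⟩ := hh
        exact hx.2 (by rw [hxe]; exact rfl)
      · rcases hx with hx | hx
        · have hxw : x = wv huv := Subtype.ext hx
          refine ⟨hxw ▸ hwS', ?_⟩
          intro hh
          rw [hxw] at hh
          have hxe : wv huv = ⟨s, hsv⟩ := hh
          exact hsu (congrArg Subtype.val hxe).symm
        · exact absurd hx x.prop
    -- T0 ∪ {u, v} is an fvs of G
    have fvsUV : IsFVS G (T0 ∪ {u, v}) := by
      rw [isFVS_iff]
      intro hcyc
      have h2 := proj_mem huv (Or.inr (Or.inr rfl)) hcyc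
      refine (isFVS_iff _ _).mp hfvs' (hasCyc_mono ?_ h2)
      intro x hx
      rw [Set.mem_preimage]
      have : x.val ∈ SG := ⟨x, hx, rfl⟩
      rw [← hSGT0] at this
      rcases this with h' | h'
      · exact Or.inl h'
      · exact Or.inr (Or.inl h')
    -- helper to rule out subsets missing some s ∈ T0
    have hnotfvs : ∀ T : Set V, T ⊆ T0 ∪ {u, v} → (∃ s ∈ T0, s ∉ T) → ¬ IsFVS G T := by
      intro T hTsub ⟨s, hs, hsT⟩ hTf
      refine (isFVS_iff G T).mp hTf (hasCyc_mono ?_ (cyc_s s hs))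
      intro x hxT
      rcases hTsub hxT with hx | hx
      · by_cases hxs : x = s
        · exact absurd (hxs ▸ hxT) hsT
        · exact Or.inl ⟨hx, hxs⟩
      · exact Or.inr hx
    by_cases fvsU : IsFVS G SG
    · refine ⟨SG, ⟨fvsU, ?_⟩, le_of_eq hcard⟩
      intro T hT hTf
      by_cases hex : ∃ s ∈ T0, s ∉ T
      · refine hnotfvs T (fun x hx => ?_) hex hTf
        have hx' := hT.subset hx
        rw [← hSGT0] at hx'
        rcases hx' with h' | h'
        · exact Or.inl h'
        · exact Or.inr (Or.inl h')
      · push_neg at hex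
        have hTeq : T = T0 := by
          apply Set.Subset.antisymm ?_ hex
          intro x hxT
          have hx' := hT.subset hxT
          rw [← hSGT0] at hx'
          rcases hx' with h' | h'
          · exact h'
          · exfalso
            apply hT.ne
            apply Set.Subset.antisymm hT.subset
            rw [← hSGT0]
            rintro y (hy | hy)
            · exact hex y hy
            · have hyu : y = u := hy
              have hxu : x = u := h'
              rw [hyu, ← hxu]
              exact hxT
        rw [hTeq] at hTf
        exact (isFVS_iff G T0).mp hTf cyc_w
    · by_cases fvsV : IsFVS G (T0 ∪ {v})
      · refine ⟨T0 ∪ {v}, ⟨fvsV, ?_⟩, ?_⟩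
        · intro T hT hTf
          by_cases hex : ∃ s ∈ T0, s ∉ T
          · refine hnotfvs T (hT.subset.trans ?_) hex hTf
            rintro x (hx | hx)
            · exact Or.inl hx
            · exact Or.inr (Or.inr hx)
          · push_neg at hex
            have hTeq : T = T0 := by
              apply Set.Subset.antisymm ?_ hex
              intro x hxT
              rcases hT.subset hxT with h' | h'
              · exact h'
              · exfalso
                apply hT.ne
                apply Set.Subset.antisymm hT.subset
                rintro y (hy | hy)
                · exact hex y hy
                · have hyv' : y = v := hy
                  have hxv' : x = v := h'
                  rw [hyv', ← hxv']
                  exact hxT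
            rw [hTeq] at hTf
            exact (isFVS_iff G T0).mp hTf cyc_w
        · rw [hcard, ← hcardT0, Set.union_singleton,
            Set.ncard_insert_of_notMem hvT0 (Set.toFinite _)]
      · refine ⟨T0 ∪ {u, v}, ⟨fvsUV, ?_⟩, ?_⟩
        · intro T hT hTf
          by_cases hex : ∃ s ∈ T0, s ∉ T
          · exact hnotfvs T hT.subset hex hTf
          · push_neg at hex
            by_cases hu : u ∈ T <;> by_cases hv : v ∈ T
            · exfalso
              apply hT.ne
              apply Set.Subset.antisymm hT.subset
              rintro y (hy | hy | hy)
              · exact hex y hy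
              · have : y = u := hy
                rwa [this]
              · have : y = v := hy
                rwa [this]
            · -- T = T0 ∪ {u} = SG
              have hTeq : T = SG := by
                rw [← hSGT0]
                apply Set.Subset.antisymm
                · intro x hxT
                  rcases hT.subset hxT with h' | h' | h'
                  · exact Or.inl h'
                  · exact Or.inr h'
                  · exact absurd (Set.mem_singleton_iff.mp h' ▸ hxT) hv
                · rintro y (hy | hy)
                  · exact hex y hy
                  · have : y = u := hy
                    rwa [this]
              rw [hTeq] at hTf
              exact fvsU hTf
            · -- T = T0 ∪ {v}
              have hTeq : T = T0 ∪ {v} := by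
                apply Set.Subset.antisymm
                · intro x hxT
                  rcases hT.subset hxT with h' | h' | h'
                  · exact Or.inl h'
                  · exact absurd (Set.mem_singleton_iff.mp h' ▸ hxT) hu
                  · exact Or.inr h'
                · rintro y (hy | hy)
                  · exact hex y hy
                  · have : y = v := hy
                    rwa [this]
              rw [hTeq] at hTf
              exact fvsV hTf
            · -- T = T0
              have hTeq : T = T0 := by
                apply Set.Subset.antisymm ?_ hex
                intro x hxT
                rcases hT.subset hxT with h' | h' | h'
                · exact h'
                · exact absurd (Set.mem_singleton_iff.mp h' ▸ hxT) hu
                · exact absurd (Set.mem_singleton_iff.mp h' ▸ hxT) hv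
              rw [hTeq] at hTf
              exact (isFVS_iff G T0).mp hTf cyc_w
        · have hset : T0 ∪ {u, v} = insert u (insert v T0) := by
            ext x
            simp only [Set.mem_union, Set.mem_insert_iff, Set.mem_singleton_iff]
            tauto
          have hunv : u ∉ insert v T0 := by
            simp only [Set.mem_insert_iff]
            push_neg
            exact ⟨huv.ne, huT0⟩
          have h1 : (T0 ∪ {u, v}).ncard = T0.ncard + 2 := by
            rw [hset, Set.ncard_insert_of_notMem hunv (Set.toFinite _),
              Set.ncard_insert_of_notMem hvT0 (Set.toFinite _)]
          rw [h1, hcard, ← hcardT0]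
          omega
  · -- Case A : the contracted vertex is not in S'
    refine ⟨SG, ⟨?_, ?_⟩, le_of_eq hcard⟩
    · rw [isFVS_iff]
      intro hcyc
      have h2 := proj huv hcommon huSG hvSG hcyc
      rw [hpre] at h2
      exact (isFVS_iff _ _).mp hfvs' h2
    · intro T hT hTf
      have hTsub : T ⊆ SG := hT.subset
      have hTr : T ⊆ Set.range (Subtype.val : {x : V // x ≠ v} → V) := by
        intro x hx
        obtain ⟨y, -, rfl⟩ := hTsub hx
        exact ⟨y, rfl⟩
      have hT' : (Subtype.val ⁻¹' T) ⊂ S' := by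
        constructor
        · rw [← hpre]
          exact Set.preimage_mono hTsub
        · intro hcontra
          apply hT.ne
          have heq : Subtype.val ⁻¹' T = S' :=
            Set.Subset.antisymm (by rw [← hpre]; exact Set.preimage_mono hTsub) hcontra
          rw [← Set.image_preimage_eq_of_subset hTr, heq]
      have h2 := (not_isFVS_iff _ _).mp (hmin' _ hT')
      have h3 := lift huv (fun hu => huSG (hTsub hu)) (fun hv => hvSG (hTsub hv)) h2
      exact (isFVS_iff G T).mp hTf h3

end Contract

end ContractAux

theorem mmfvs_contract_le {V : Type*} [Fintype V] [DecidableEq V]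
    (G : SimpleGraph V) (u v : V) (huv : G.Adj u v)
    (hcommon : G.neighborSet u ∩ G.neighborSet v = ∅) :
    mmfvs (contract G u v) ≤ mmfvs G := by
  classical
  by_cases hne : {k | ∃ S' : Set {x : V // x ≠ v},
      IsMinFVS (contract G u v) S' ∧ S'.ncard = k}.Nonempty
  · unfold mmfvs
    apply csSup_le hne
    rintro k ⟨S', hS', rfl⟩
    obtain ⟨S, hS, hle⟩ := ContractAux.key huv hcommon hS'
    refine le_trans hle (le_csSup ⟨Nat.card V, ?_⟩ ⟨S, hS, rfl⟩)
    rintro m ⟨S2, -, rfl⟩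
    rw [← Set.ncard_univ]
    exact Set.ncard_le_ncard (Set.subset_univ _) Set.finite_univ
  · unfold mmfvs
    rw [Set.not_nonempty_iff_eq_empty.mp hne, csSup_empty]
    exact Nat.zero_le _
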